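/- Let A be a square matrix over ℚ indexed by a finite type V, and for each v ∈ V let c^v = [c^v₁, …, c^v_{k_v}] (k_v ≥ 1) be a list of rationals such that q_v := |c^v₂, …, c^v_{k_v}| ≠ 0, and set p_v := |c^v₁, …, c^v_{k_v}|. Let G be the 'hairy' matrix indexed by V ⊕ (Σ v ∈ V, Fin(k_v − 1)) obtained by grafting each chain c^v onto its vertex v: G agrees with A on the V×V block except that G(v,v) = A(v,v) + c^v₁ for each v; for each v the added vertices carry diagonal entries c^v₂, …, c^v_{k_v}, with entries −1 (in both symmetric positions) between v and the vertex carrying c^v₂ and between consecutive added vertices of the same chain; and all other entries are 0. Let A′ be the matrix indexed by V that agrees with A off the diagonal and has diagonal entries A′(v,v) = A(v,v) + p_v/q_v. Then det G = (∏_{v ∈ V} q_v) · det A′. -/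
import Mathlib


/-- The symmetric tridiagonal matrix with diagonal entries given by the list `L`
and `-1` immediately above and below the diagonal. -/
def triMat (L : List ℚ) : Matrix (Fin L.length) (Fin L.length) ℚ :=
  Matrix.of fun i j =>
    if (i : ℕ) = (j : ℕ) then L.get i
    else if (i : ℕ) + 1 = (j : ℕ) ∨ (j : ℕ) + 1 = (i : ℕ) then -1 else 0

/-- The tridiagonal determinant `|n₁, …, n_k|`; the determinant of the empty list is `1`. -/
def tridet (L : List ℚ) : ℚ := (triMat L).det

/-- The "hairy" matrix obtained from `A` by grafting, onto each vertex `v`, the chain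
with first entry `c₁ v` and remaining entries `rest v`: the diagonal entry at `v`
becomes `A v v + c₁ v`, each added vertex of the chain at `v` carries the corresponding
diagonal entry from `rest v`, the vertex `v` is joined by `-1` to the first added
vertex of its chain, and consecutive added vertices of the same chain are joined
by `-1`; all other new entries vanish. -/
def hairyMat {V : Type*} [DecidableEq V] (A : Matrix V V ℚ) (c₁ : V → ℚ)
    (rest : V → List ℚ) :
    Matrix (V ⊕ Σ v : V, Fin (rest v).length) (V ⊕ Σ v : V, Fin (rest v).length) ℚ :=
  Matrix.of fun x y =>
    match x, y with
    | .inl w, .inl w' => if w = w' then A w w + c₁ w else A w w'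
    | .inl w, .inr ⟨u, j⟩ => if w = u ∧ (j : ℕ) = 0 then -1 else 0
    | .inr ⟨u, i⟩, .inl w => if w = u ∧ (i : ℕ) = 0 then -1 else 0
    | .inr ⟨u, i⟩, .inr ⟨u', j⟩ =>
        if u = u' ∧ (i : ℕ) = (j : ℕ) then (rest u).get i
        else if u = u' ∧ ((i : ℕ) + 1 = (j : ℕ) ∨ (j : ℕ) + 1 = (i : ℕ)) then -1 else 0

/- ## tridiagonal determinant recursions -/

lemma triMat_submatrix (a : ℚ) (t : List ℚ) :
    (triMat (a :: t)).submatrix Fin.succ Fin.succ = triMat t := by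
  ext i j
  simp [triMat, Matrix.submatrix_apply, Fin.val_succ]

lemma tridet_nil : tridet ([] : List ℚ) = 1 := by
  simp [tridet, Matrix.det_fin_zero]

lemma tridet_singleton (a : ℚ) : tridet [a] = a := by
  simp [tridet, Matrix.det_fin_one, triMat]

lemma succAbove_one_val {n : ℕ} (j : Fin (n+1)) :
    (((1 : Fin (n+2)).succAbove j) : ℕ) = if (j : ℕ) = 0 then 0 else (j : ℕ) + 1 := by
  rcases j with ⟨jv, hj⟩
  rw [Fin.succAbove]
  split <;> split <;> simp_all [Fin.lt_def]

lemma minor_det (a b : ℚ) (s : List ℚ) :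
    Matrix.det ((triMat (a :: b :: s)).submatrix (Fin.succ (n := s.length + 1))
      (Fin.succAbove (n := s.length + 1) (1 : Fin (s.length + 2)))) = -tridet s := by
  rw [Matrix.det_succ_column_zero (n := s.length), Fin.sum_univ_succ]
  have h0 : ∀ i : Fin s.length,
      ((triMat (a :: b :: s)).submatrix Fin.succ ((1 : Fin (s.length+2)).succAbove))
        i.succ 0 = 0 := by
    intro i
    simp [triMat, Matrix.submatrix_apply, succAbove_one_val, Fin.val_succ]
  rw [Finset.sum_eq_zero (by intro i _; rw [h0 i]; ring)]
  have h1 : ((triMat (a :: b :: s)).submatrix Fin.succ ((1 : Fin (s.length+2)).succAbove))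
      (0 : Fin (s.length+1)) (0 : Fin (s.length+1)) = -1 := by
    simp [triMat, Matrix.submatrix_apply, succAbove_one_val]
  rw [h1]
  have h2 : (((triMat (a :: b :: s)).submatrix Fin.succ ((1 : Fin (s.length+2)).succAbove))
      |>.submatrix ((0 : Fin (s.length+1)).succAbove) Fin.succ) = triMat s := by
    ext i j
    simp [triMat, Matrix.submatrix_apply, succAbove_one_val, Fin.val_succ]
  rw [h2]
  simp [tridet]

lemma tridet_cons₂ (a b : ℚ) (s : List ℚ) :
    tridet (a :: b :: s) = a * tridet (b :: s) - tridet s := by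
  rw [tridet]
  rw [Matrix.det_succ_row_zero (n := s.length + 1), Fin.sum_univ_succ, Fin.sum_univ_succ]
  have h0 : ∀ j : Fin s.length,
      triMat (a :: b :: s) (0 : Fin (s.length+2)) j.succ.succ = 0 := by
    intro j
    simp [triMat, Fin.val_succ]
  rw [Finset.sum_eq_zero (by intro j _; rw [h0 j]; ring)]
  have hone : Fin.succ (0 : Fin (s.length+1)) = (1 : Fin (s.length+2)) := rfl
  rw [hone]
  have h00 : triMat (a :: b :: s) (0 : Fin (s.length+2)) (0 : Fin (s.length+2)) = a := by
    simp [triMat]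
  have h01 : triMat (a :: b :: s) (0 : Fin (s.length+2)) (1 : Fin (s.length+2)) = -1 := by
    have h : ((1 : Fin (s.length + 2)) : ℕ) = 1 := rfl
    simp [triMat, h]
  have hsub : (triMat (a :: b :: s)).submatrix
      (Fin.succ : Fin (s.length+1) → Fin (s.length+2)) Fin.succ = triMat (b :: s) := by
    ext i j
    simp [triMat, Matrix.submatrix_apply, Fin.val_succ]
  rw [h00, h01, Fin.succAbove_zero]
  have hsd : ((triMat (a :: b :: s)).submatrix (Fin.succ (n := s.length+1))
      (Fin.succ (n := s.length+1))).det = tridet (b :: s) := by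
    rw [hsub]; rfl
  rw [hsd]
  rw [minor_det a b s]
  norm_num
  ring

/- ## the (0,0) entry of the inverse -/

lemma triMat_inv_entry (a : ℚ) (t : List ℚ)
    (i j : Fin (a :: t).length) (hi : (i : ℕ) = 0) (hj : (j : ℕ) = 0) :
    (triMat (a :: t))⁻¹ i j = tridet t / tridet (a :: t) := by
  have hi0 : i = ⟨0, Nat.succ_pos _⟩ := Fin.ext hi
  have hj0 : j = ⟨0, Nat.succ_pos _⟩ := Fin.ext hj
  subst hi0 hj0
  rw [Matrix.inv_def, Matrix.smul_apply]
  have hadj : (triMat (a :: t)).adjugate ⟨0, Nat.succ_pos _⟩ ⟨0, Nat.succ_pos _⟩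
      = tridet t := by
    have := Matrix.adjugate_fin_succ_eq_det_submatrix (n := t.length) (triMat (a :: t))
      ⟨0, Nat.succ_pos _⟩ ⟨0, Nat.succ_pos _⟩
    rw [this]
    have h0 : (⟨0, Nat.succ_pos _⟩ : Fin (t.length + 1)).succAbove = Fin.succ := rfl
    rw [h0]
    have hsd : ((triMat (a :: t)).submatrix (Fin.succ (n := t.length))
        (Fin.succ (n := t.length))).det = tridet t := by
      rw [triMat_submatrix]; rfl
    rw [hsd]
    simp
  rw [hadj]
  rw [Ring.inverse_eq_inv]
  have hd : (triMat (a :: t)).det = tridet (a :: t) := rfl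
  rw [hd]
  rw [div_eq_inv_mul]
  rfl

lemma key_frac (c : ℚ) (L : List ℚ) (hL : tridet L ≠ 0) :
    c - (if h : 0 < L.length then (triMat L)⁻¹ ⟨0, h⟩ ⟨0, h⟩ else 0)
      = tridet (c :: L) / tridet L := by
  cases L with
  | nil =>
      rw [dif_neg (by simp)]
      rw [tridet_nil, tridet_singleton]
      ring
  | cons a t =>
      rw [dif_pos (by simp : 0 < (a :: t).length)]
      rw [triMat_inv_entry a t _ _ rfl rfl]
      rw [tridet_cons₂ c a t]
      field_simp

/- ## determinant of dependent block diagonal matrices -/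

open Matrix in
lemma det_blockDiagonal'' {V : Type*} [Fintype V] [DecidableEq V] (k : V → ℕ)
    (M : ∀ v, Matrix (Fin (k v)) (Fin (k v)) ℚ) :
    (Matrix.blockDiagonal' M).det = ∏ v, (M v).det := by
  classical
  let e := Fintype.equivFin V
  let b : (Σ v, Fin (k v)) → Fin (Fintype.card V) := fun x => e x.1
  have hbt : (Matrix.blockDiagonal' M).BlockTriangular b := by
    rintro ⟨u, i⟩ ⟨u', j⟩ hxy
    exact Matrix.blockDiagonal'_apply_ne M i j (fun h => absurd (congrArg e h) (ne_of_gt hxy))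
  rw [hbt.det]
  have himg : Finset.univ.image b
      = (Finset.univ.filter (fun v => k v ≠ 0)).image (fun v => e v) := by
    ext a
    simp only [Finset.mem_image, Finset.mem_filter, Finset.mem_univ, true_and]
    constructor
    · rintro ⟨⟨v, j⟩, -, rfl⟩
      exact ⟨v, fun h => (h ▸ j).elim0, rfl⟩
    · rintro ⟨v, hv, rfl⟩
      exact ⟨⟨v, ⟨0, Nat.pos_of_ne_zero hv⟩⟩, rfl⟩
  rw [himg, Finset.prod_image (by intro x _ y _ h; exact e.injective h)]
  have hblock : ∀ v : V,
      ((Matrix.blockDiagonal' M).toSquareBlock b (e v)).det = (M v).det := by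
    intro v
    have hgv : ∀ x : {x : Σ v, Fin (k v) // b x = e v}, x.1.1 = v := fun x =>
      e.injective x.2
    let g : Fin (k v) ≃ {x : Σ v, Fin (k v) // b x = e v} :=
      { toFun := fun j => ⟨⟨v, j⟩, rfl⟩
        invFun := fun x => Fin.cast (congrArg k (hgv x)) x.1.2
        left_inv := fun j => rfl
        right_inv := by
          rintro ⟨⟨u, j⟩, hu⟩
          have h : u = v := e.injective hu
          subst h
          rfl }
    rw [← Matrix.det_submatrix_equiv_self g]
    congr 1
    ext i j
    simp [Matrix.toSquareBlock_def, g, Matrix.blockDiagonal'_apply_eq]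
  rw [Finset.prod_congr rfl (fun v _ => hblock v)]
  apply Finset.prod_subset (Finset.subset_univ _)
  intro v _ hv
  simp only [Finset.mem_filter, Finset.mem_univ, true_and, not_not] at hv
  have : IsEmpty (Fin (k v)) := by rw [hv]; exact Fin.isEmpty'
  exact Matrix.det_isEmpty

/- ## the hair blocks -/

def Bmat {V : Type*} [DecidableEq V] (rest : V → List ℚ) :
    Matrix V (Σ v : V, Fin (rest v).length) ℚ :=
  Matrix.of fun w x => if w = x.1 ∧ (x.2 : ℕ) = 0 then -1 else 0

def Cmat {V : Type*} [DecidableEq V] (rest : V → List ℚ) :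
    Matrix (Σ v : V, Fin (rest v).length) V ℚ :=
  Matrix.of fun x w => if w = x.1 ∧ (x.2 : ℕ) = 0 then -1 else 0

lemma sum_hit {V : Type*} [Fintype V] [DecidableEq V] (rest : V → List ℚ) (w : V)
    (f : (Σ v : V, Fin (rest v).length) → ℚ) :
    (∑ x : Σ v : V, Fin (rest v).length,
        (if w = x.1 ∧ (x.2 : ℕ) = 0 then (-1 : ℚ) else 0) * f x)
      = if h : 0 < (rest w).length then -f ⟨w, ⟨0, h⟩⟩ else 0 := by
  rw [← Finset.univ_sigma_univ, Finset.sum_sigma]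
  rw [Finset.sum_eq_single w]
  · split
    case isTrue h =>
      rw [Finset.sum_eq_single (⟨0, h⟩ : Fin (rest w).length)]
      · simp
      · intro j _ hj
        have hj0 : ¬((j : ℕ) = 0) := fun hc => hj (Fin.ext hc)
        simp [hj0]
      · intro hmem
        exact absurd (Finset.mem_univ _) hmem
    case isFalse h =>
      apply Finset.sum_eq_zero
      intro j _
      exact absurd j.pos h
  · intro v _ hv
    apply Finset.sum_eq_zero
    intro j _
    simp [show ¬(w = v) from fun hc => hv hc.symm]
  · intro hmem
    exact absurd (Finset.mem_univ _) hmem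

lemma BNC {V : Type*} [Fintype V] [DecidableEq V] (rest : V → List ℚ) (w w' : V) :
    (Bmat rest * Matrix.blockDiagonal' (fun v => (triMat (rest v))⁻¹) * Cmat rest) w w'
      = if w = w' then
          (if h : 0 < (rest w).length then (triMat (rest w))⁻¹ ⟨0, h⟩ ⟨0, h⟩ else 0)
        else 0 := by
  set N := Matrix.blockDiagonal' (fun v => (triMat (rest v))⁻¹) with hN
  rw [Matrix.mul_apply]
  have h1 : ∀ y, (Bmat rest * N) w y
      = if h : 0 < (rest w).length then -N ⟨w, ⟨0, h⟩⟩ y else 0 := by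
    intro y
    rw [Matrix.mul_apply]
    exact sum_hit rest w (fun x => N x y)
  simp_rw [h1]
  by_cases h : 0 < (rest w).length
  · simp only [dif_pos h]
    have h2 : ∀ y, (-N ⟨w, ⟨0, h⟩⟩ y) * Cmat rest y w'
        = (if w' = y.1 ∧ (y.2 : ℕ) = 0 then (-1 : ℚ) else 0) * (-N ⟨w, ⟨0, h⟩⟩ y) := by
      intro y
      rw [mul_comm]
      rfl
    simp_rw [h2]
    rw [sum_hit rest w' (fun y => -N ⟨w, ⟨0, h⟩⟩ y)]
    by_cases hww : w = w'
    · subst hww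
      rw [if_pos rfl, dif_pos h, neg_neg, hN, Matrix.blockDiagonal'_apply_eq]
    · have hNe : ∀ h' : 0 < (rest w').length, N ⟨w, ⟨0, h⟩⟩ ⟨w', ⟨0, h'⟩⟩ = 0 := by
        intro h'
        rw [hN]
        exact Matrix.blockDiagonal'_apply_ne _ _ _ hww
      split
      · next h' => rw [hNe h']; simp [hww]
      · simp [hww]
  · simp only [dif_neg h]
    rw [Finset.sum_eq_zero (fun y _ => zero_mul _)]
    by_cases hww : w = w'
    · subst hww
      simp [h]
    · rw [if_neg hww]

/- ## main theorem -/

/-- First formula of the hairy-graph determinant theorem: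
`det G = (∏ v, q_v) · det A′` where `A′` has the diagonal marks `A v v + p_v / q_v`. -/
theorem det_hairy {V : Type*} [Fintype V] [DecidableEq V]
    (A : Matrix V V ℚ) (c₁ : V → ℚ) (rest : V → List ℚ)
    (hq : ∀ v, tridet (rest v) ≠ 0) :
    (hairyMat A c₁ rest).det
      = (∏ v, tridet (rest v)) *
        (Matrix.of fun w w' : V =>
          if w = w' then A w w + tridet (c₁ w :: rest w) / tridet (rest w)
          else A w w').det := by
  classical
  set D := Matrix.blockDiagonal' (fun v => triMat (rest v)) with hD
  set N := Matrix.blockDiagonal' (fun v => (triMat (rest v))⁻¹) with hN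
  set A₁ : Matrix V V ℚ :=
    Matrix.of (fun w w' => if w = w' then A w w + c₁ w else A w w') with hA₁
  have hdetv : ∀ v, (triMat (rest v)).det ≠ 0 := fun v => hq v
  have hDN : D * N = 1 := by
    rw [hD, hN, ← Matrix.blockDiagonal'_mul, ← Matrix.blockDiagonal'_one]
    exact congrArg _ (funext fun v =>
      Matrix.mul_nonsing_inv _ (isUnit_iff_ne_zero.mpr (hdetv v)))
  have hND : N * D = 1 := by
    rw [hD, hN, ← Matrix.blockDiagonal'_mul, ← Matrix.blockDiagonal'_one]
    exact congrArg _ (funext fun v =>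
      Matrix.nonsing_inv_mul _ (isUnit_iff_ne_zero.mpr (hdetv v)))
  letI instInv : Invertible D := ⟨N, hND, hDN⟩
  have hblocks : hairyMat A c₁ rest = Matrix.fromBlocks A₁ (Bmat rest) (Cmat rest) D := by
    ext x y
    rcases x with w | ⟨u, i⟩ <;> rcases y with w' | ⟨u', j⟩
    · rfl
    · rfl
    · rfl
    · show hairyMat A c₁ rest (Sum.inr ⟨u, i⟩) (Sum.inr ⟨u', j⟩)
        = Matrix.blockDiagonal' (fun v => triMat (rest v)) ⟨u, i⟩ ⟨u', j⟩
      by_cases huu : u = u'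
      · subst huu
        rw [Matrix.blockDiagonal'_apply_eq]
        simp [hairyMat, triMat]
      · rw [Matrix.blockDiagonal'_apply_ne _ _ _ huu]
        simp [hairyMat, huu]
  rw [hblocks, Matrix.det_fromBlocks₂₂]
  have hinvOf : ⅟D = N := rfl
  rw [hinvOf]
  have hDdet : D.det = ∏ v, tridet (rest v) := by
    rw [hD, det_blockDiagonal'']
    rfl
  rw [hDdet]
  congr 1
  congr 1
  ext w w'
  rw [Matrix.sub_apply, BNC rest w w']
  by_cases hww : w = w'
  · subst hww
    simp only [if_pos rfl, hA₁, Matrix.of_apply, eq_self_iff_true, if_true]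
    rw [← key_frac (c₁ w) (rest w) (hq w), add_sub_assoc]
  · simp [hww, hA₁]
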